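/- Let X and Y be real-valued, integrable random variables with E[X] = E[Y], and suppose X is stochastically optimistic for Y. Then −X is stochastically optimistic for −Y. -/

import Mathlib

open MeasureTheory

/-- `X` is stochastically optimistic for `Y`: `E[u(X)] ≥ E[u(Y)]` for every convex
increasing `u : ℝ → ℝ` for which both expectations exist. -/
def StochasticallyOptimistic {Ω : Type*} [MeasurableSpace Ω] (μ : Measure Ω)
    (X Y : Ω → ℝ) : Prop :=
  ∀ u : ℝ → ℝ, ConvexOn ℝ Set.univ u → Monotone u →
    Integrable (fun ω => u (X ω)) μ → Integrable (fun ω => u (Y ω)) μ →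
    ∫ ω, u (Y ω) ∂μ ≤ ∫ ω, u (X ω) ∂μ

-- slope of chord [a,b] ≤ slope of chord [c,d] when a<b≤c<d
lemma aux_slope4 {g : ℝ → ℝ} (hg : ConvexOn ℝ Set.univ g) {a b c d : ℝ}
    (hab : a < b) (hbc : b ≤ c) (hcd : c < d) :
    (g b - g a) / (b - a) ≤ (g d - g c) / (d - c) := by
  rcases eq_or_lt_of_le hbc with rfl | hbc
  · exact hg.slope_mono_adjacent trivial trivial hab hcd
  · calc (g b - g a) / (b - a) ≤ (g c - g b) / (c - b) :=
          hg.slope_mono_adjacent trivial trivial hab hbc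
      _ ≤ (g d - g c) / (d - c) := hg.slope_mono_adjacent trivial trivial hbc hcd

lemma aux_convex_sup {F : ℝ → ℝ} (hF : ConvexOn ℝ Set.univ F) {m : ℝ}
    (hmono : MonotoneOn F (Set.Ici m)) :
    ConvexOn ℝ Set.univ (fun x => F (x ⊔ m)) := by
  refine ⟨convex_univ, ?_⟩
  intro x _ y _ a b ha hb hab
  simp only [smul_eq_mul]
  have hxm := mul_le_mul_of_nonneg_left (le_sup_right : m ≤ x ⊔ m) ha
  have hym := mul_le_mul_of_nonneg_left (le_sup_right : m ≤ y ⊔ m) hb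
  have h1 : (a * x + b * y) ⊔ m ≤ a * (x ⊔ m) + b * (y ⊔ m) := by
    apply sup_le
    · have h3 := mul_le_mul_of_nonneg_left (le_sup_left : x ≤ x ⊔ m) ha
      have h4 := mul_le_mul_of_nonneg_left (le_sup_left : y ≤ y ⊔ m) hb
      linarith
    · have hm : m = a * m + b * m := by rw [← add_mul, hab, one_mul]
      linarith
  have h2 : a * (x ⊔ m) + b * (y ⊔ m) ∈ Set.Ici m := by
    have hm : m = a * m + b * m := by rw [← add_mul, hab, one_mul]
    simp only [Set.mem_Ici]; linarith
  calc F ((a * x + b * y) ⊔ m) ≤ F (a * (x ⊔ m) + b * (y ⊔ m)) :=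
        hmono (Set.mem_Ici.2 le_sup_right) h2 h1
    _ ≤ a * F (x ⊔ m) + b * F (y ⊔ m) := by
        have := hF.2 (Set.mem_univ (x ⊔ m)) (Set.mem_univ (y ⊔ m)) ha hb hab
        simpa using this

set_option maxHeartbeats 1000000 in
/-- If `E[X] = E[Y]` and `X ⪰_so Y`, then `-X ⪰_so -Y` (Lemma `negso` of the paper). -/
theorem stmt_16 {Ω : Type*} [MeasurableSpace Ω] (μ : Measure Ω) [IsProbabilityMeasure μ]
    (X Y : Ω → ℝ) (hX : Integrable X μ) (hY : Integrable Y μ)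
    (hmean : ∫ ω, X ω ∂μ = ∫ ω, Y ω ∂μ)
    (hso : StochasticallyOptimistic μ X Y) :
    StochasticallyOptimistic μ (fun ω => -X ω) (fun ω => -Y ω) := by
  intro u hu hmono hIX hIY
  set g : ℝ → ℝ := fun x => u (-x) with hgdef
  have hIX : Integrable (fun ω => g (X ω)) μ := hIX
  have hIY : Integrable (fun ω => g (Y ω)) μ := hIY
  show ∫ ω, g (Y ω) ∂μ ≤ ∫ ω, g (X ω) ∂μ
  -- basic facts about g
  have hgconv : ConvexOn ℝ Set.univ g := by
    refine ⟨convex_univ, ?_⟩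
    intro x _ y _ a b ha hb hab
    have h := hu.2 (Set.mem_univ (-x)) (Set.mem_univ (-y)) ha hb hab
    simp only [smul_eq_mul] at h ⊢
    have hne : -(a * x + b * y) = a * (-x) + b * (-y) := by ring
    show u (-(a * x + b * y)) ≤ a * u (-x) + b * u (-y)
    rw [hne]; exact h
  have hganti : Antitone g := fun x y hxy => hmono (neg_le_neg hxy)
  have hgmeas : Measurable g := hmono.measurable.comp measurable_neg
  -- it suffices to prove the bound up to every ε > 0
  refine le_of_forall_pos_le_add (fun ε hε => ?_)
  -- tail function
  set t : ℝ → ℝ → ℝ := fun m y => if y < m then g y - g 0 else 0 with htdef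
  have htmeas : ∀ m, Measurable (t m) := fun m =>
    Measurable.ite measurableSet_Iio (hgmeas.sub measurable_const) measurable_const
  have htbound : ∀ m y, ‖t m y‖ ≤ |g y| + |g 0| := by
    intro m y
    show ‖if y < m then g y - g 0 else 0‖ ≤ |g y| + |g 0|
    by_cases h : y < m
    · rw [if_pos h, Real.norm_eq_abs]
      exact (abs_sub _ _).trans le_rfl
    · rw [if_neg h]; simp; positivity
  have htail : Filter.Tendsto (fun n : ℕ => ∫ ω, t (-(n : ℝ)) (Y ω) ∂μ)
      Filter.atTop (nhds 0) := by
    have h0 : (0 : ℝ) = ∫ (_ : Ω), (0 : ℝ) ∂μ := by simp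
    rw [h0]
    apply tendsto_integral_of_dominated_convergence (fun ω => |g (Y ω)| + |g 0|)
    · exact fun n => ((htmeas _).comp_aemeasurable hY.aemeasurable).aestronglyMeasurable
    · exact hIY.abs.add (integrable_const _)
    · exact fun n => Filter.Eventually.of_forall (fun ω => htbound _ _)
    · refine Filter.Eventually.of_forall (fun ω => ?_)
      apply Filter.Tendsto.congr' _ tendsto_const_nhds
      rw [Filter.EventuallyEq, Filter.eventually_atTop]
      refine ⟨⌈-Y ω⌉₊, fun n hn => ?_⟩
      have h1 : -(n : ℝ) ≤ Y ω := by
        have h2 := Nat.le_ceil (-Y ω)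
        have h3 : ((⌈-Y ω⌉₊ : ℕ) : ℝ) ≤ (n : ℝ) := Nat.cast_le.2 hn
        linarith
      show (0 : ℝ) = if Y ω < -(n : ℝ) then g (Y ω) - g 0 else 0
      rw [if_neg (not_lt.2 h1)]
  obtain ⟨n, hn⟩ := (htail.eventually_lt_const (by linarith : (0:ℝ) < ε/2)).exists
  set m : ℝ := -(n : ℝ) with hmdef
  have hm0 : m ≤ 0 := by rw [hmdef]; simp
  -- choose δ
  set D : ℝ := g (m - 1) - g m with hDdef
  have hD0 : 0 ≤ D := sub_nonneg.2 (hganti (by linarith))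
  set δ : ℝ := min 1 (ε / (2 * (D + 1))) with hδdef
  have hδpos : 0 < δ := lt_min one_pos (by positivity)
  have hδ1 : δ ≤ 1 := min_le_left _ _
  have hδle : δ ≤ ε / (2 * (D + 1)) := min_le_right _ _
  set K : ℝ := (g (m - δ) - g m) / δ with hKdef
  have hK0 : 0 ≤ K := div_nonneg (sub_nonneg.2 (hganti (by linarith))) hδpos.le
  have hKδ : K * δ = g (m - δ) - g m := by
    rw [hKdef]; field_simp
  clear_value K δ D m
  -- the strip error is small
  have hstrip : g (m - δ) - g m ≤ ε / 2 := by
    have hsec : (g (m - 1) - g m) / ((m - 1) - m) ≤ (g (m - δ) - g m) / ((m - δ) - m) := by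
      apply hgconv.secant_mono trivial trivial trivial
      · intro h; linarith [h]
      · intro h; have : δ = 0 := by linarith [h]
        linarith [hδpos]
      · linarith
    have h1 : (m - 1) - m = -1 := by ring
    have h2 : (m - δ) - m = -δ := by ring
    rw [h1, h2, div_neg, div_neg, neg_le_neg_iff, div_one] at hsec
    -- hsec : (g (m - δ) - g m) / δ ≤ g (m - 1) - g m
    have h3 : g (m - δ) - g m ≤ δ * D := by
      have h4 := (div_le_iff₀ hδpos).1 hsec
      rw [hDdef]; linarith
    have h4 : δ * D ≤ (ε / (2 * (D + 1))) * D :=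
      mul_le_mul_of_nonneg_right hδle hD0
    have h5 : (ε / (2 * (D + 1))) * D ≤ ε / 2 := by
      rw [div_mul_eq_mul_div, div_le_div_iff₀ (by positivity) (by norm_num)]
      nlinarith
    exact h3.trans (h4.trans h5)
  -- the test function
  set F : ℝ → ℝ := fun x => g x + K * x with hFdef
  have hFconv : ConvexOn ℝ Set.univ F := by
    refine ⟨convex_univ, ?_⟩
    intro x _ y _ a b ha hb hab
    have h := hgconv.2 (Set.mem_univ x) (Set.mem_univ y) ha hb hab
    simp only [smul_eq_mul] at h ⊢
    show g (a * x + b * y) + K * (a * x + b * y) ≤ a * (g x + K * x) + b * (g y + K * y)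
    nlinarith [h]
  have hFmono : MonotoneOn F (Set.Ici m) := by
    intro y hy z hz hyz
    rcases eq_or_lt_of_le hyz with rfl | hyz
    · exact le_rfl
    have hsl : (g m - g (m - δ)) / (m - (m - δ)) ≤ (g z - g y) / (z - y) :=
      aux_slope4 hgconv (by linarith) hy hyz
    have h1 : m - (m - δ) = δ := by ring
    rw [h1] at hsl
    have h2 : (g m - g (m - δ)) / δ = -K := by rw [hKdef]; ring
    rw [h2] at hsl
    have h3 : -K * (z - y) ≤ g z - g y := (le_div_iff₀ (by linarith)).1 hsl
    show g y + K * y ≤ g z + K * z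
    nlinarith
  set v : ℝ → ℝ := fun x => F (x ⊔ m) with hvdef
  have hvconv : ConvexOn ℝ Set.univ v := aux_convex_sup hFconv hFmono
  have hvmono : Monotone v := fun x y hxy =>
    hFmono (Set.mem_Ici.2 le_sup_right) (Set.mem_Ici.2 le_sup_right)
      (sup_le_sup_right hxy m)
  have hvmeas : Measurable v := by
    have hFm : Measurable F := hgmeas.add (measurable_id.const_mul K)
    exact hFm.comp (measurable_id.max measurable_const)
  have hvbd : ∀ x : ℝ, ‖v x‖ ≤ (|g x| + |g m|) + (|K| * |x| + |K| * |m|) := by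
    intro x
    have h1 : |g (x ⊔ m)| ≤ |g x| + |g m| := by
      rcases le_total x m with h | h
      · rw [sup_eq_right.2 h]; linarith [abs_nonneg (g x)]
      · rw [sup_eq_left.2 h]; linarith [abs_nonneg (g m)]
    have h2 : |K * (x ⊔ m)| ≤ |K| * |x| + |K| * |m| := by
      rw [abs_mul]
      have hx1 := mul_nonneg (abs_nonneg K) (abs_nonneg x)
      have hx2 := mul_nonneg (abs_nonneg K) (abs_nonneg m)
      rcases le_total x m with h | h
      · rw [sup_eq_right.2 h]; linarith
      · rw [sup_eq_left.2 h]; linarith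
    calc ‖v x‖ = |g (x ⊔ m) + K * (x ⊔ m)| := rfl
      _ ≤ |g (x ⊔ m)| + |K * (x ⊔ m)| := abs_add_le _ _
      _ ≤ _ := by linarith
  have hIvX : Integrable (fun ω => v (X ω)) μ := by
    apply Integrable.mono'
      (((hIX.abs.add (integrable_const _))).add ((hX.abs.const_mul |K|).add (integrable_const _)))
      ((hvmeas.comp_aemeasurable hX.aemeasurable).aestronglyMeasurable)
    exact Filter.Eventually.of_forall (fun ω => hvbd (X ω))
  have hIvY : Integrable (fun ω => v (Y ω)) μ := by
    apply Integrable.mono'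
      (((hIY.abs.add (integrable_const _))).add ((hY.abs.const_mul |K|).add (integrable_const _)))
      ((hvmeas.comp_aemeasurable hY.aemeasurable).aestronglyMeasurable)
    exact Filter.Eventually.of_forall (fun ω => hvbd (Y ω))
  have hstar : ∫ ω, v (Y ω) ∂μ ≤ ∫ ω, v (X ω) ∂μ := hso v hvconv hvmono hIvX hIvY
  -- subtract the linear part
  set H : ℝ → ℝ := fun x => v x - K * x with hHdef
  have hIHX : Integrable (fun ω => H (X ω)) μ := hIvX.sub (hX.const_mul K)
  have hIHY : Integrable (fun ω => H (Y ω)) μ := hIvY.sub (hY.const_mul K)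
  have hHXint : ∫ ω, H (X ω) ∂μ = (∫ ω, v (X ω) ∂μ) - K * ∫ ω, X ω ∂μ := by
    rw [show (fun ω => H (X ω)) = fun ω => v (X ω) - K * X ω from rfl,
      integral_sub hIvX (hX.const_mul K), integral_const_mul]
  have hHYint : ∫ ω, H (Y ω) ∂μ = (∫ ω, v (Y ω) ∂μ) - K * ∫ ω, Y ω ∂μ := by
    rw [show (fun ω => H (Y ω)) = fun ω => v (Y ω) - K * Y ω from rfl,
      integral_sub hIvY (hY.const_mul K), integral_const_mul]
  have hHle : ∫ ω, H (Y ω) ∂μ ≤ ∫ ω, H (X ω) ∂μ := by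
    rw [hHXint, hHYint, hmean]; linarith
  -- pointwise upper bound : H ≤ g + ε/2
  have hub : ∀ x : ℝ, H x ≤ g x + ε / 2 := by
    intro x
    rcases le_total m x with h | h
    · have hx : x ⊔ m = x := sup_eq_left.2 h
      show F (x ⊔ m) - K * x ≤ g x + ε / 2
      rw [hx]
      show g x + K * x - K * x ≤ g x + ε / 2
      linarith
    · have hx : x ⊔ m = m := sup_eq_right.2 h
      show F (x ⊔ m) - K * x ≤ g x + ε / 2
      rw [hx]
      show g m + K * m - K * x ≤ g x + ε / 2
      rcases le_or_gt (m - δ) x with h2 | h2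
      · -- strip: m - δ ≤ x ≤ m
        have h3 : K * (m - x) ≤ K * δ := mul_le_mul_of_nonneg_left (by linarith) hK0
        have h4 : g m ≤ g x := hganti h
        nlinarith [hKδ, hstrip]
      · -- far tail : x < m - δ, here H x ≤ g x
        have hsec : (g x - g m) / (x - m) ≤ (g (m - δ) - g m) / ((m - δ) - m) := by
          apply hgconv.secant_mono trivial trivial trivial
          · intro hxx; linarith [hxx]
          · intro hxx; have : δ = 0 := by linarith [hxx]
            linarith [hδpos]
          · linarith
        have h5 : (m - δ) - m = -δ := by ring
        rw [h5, div_neg] at hsec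
        have h6 : (g x - g m) / (x - m) ≤ -K := by rw [hKdef]; exact hsec
        have h7 : -K * (x - m) ≤ g x - g m := by
          have h8 := (div_le_iff_of_neg (by linarith : x - m < 0)).1 h6
          linarith
        linarith
  -- pointwise lower bound : g - t m ≤ H
  have hlb : ∀ y : ℝ, g y - t m y ≤ H y := by
    intro y
    by_cases h : y < m
    · have hy : y ⊔ m = m := sup_eq_right.2 h.le
      show g y - (if y < m then g y - g 0 else 0) ≤ F (y ⊔ m) - K * y
      rw [if_pos h, hy]
      show g y - (g y - g 0) ≤ g m + K * m - K * y
      have h1 : g 0 ≤ g m := hganti hm0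
      have h2 : 0 ≤ K * (m - y) := mul_nonneg hK0 (by linarith)
      nlinarith
    · have hy : y ⊔ m = y := sup_eq_left.2 (not_lt.1 h)
      show g y - (if y < m then g y - g 0 else 0) ≤ F (y ⊔ m) - K * y
      rw [if_neg h, hy]
      show g y - 0 ≤ g y + K * y - K * y
      linarith
  -- integrability of tail
  have hItY : Integrable (fun ω => t m (Y ω)) μ := by
    apply Integrable.mono' (hIY.abs.add (integrable_const |g 0|))
      (((htmeas m).comp_aemeasurable hY.aemeasurable).aestronglyMeasurable)
    exact Filter.Eventually.of_forall (fun ω => htbound m (Y ω))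
  -- final chain
  have c1 : ∫ ω, g (Y ω) ∂μ - ∫ ω, t m (Y ω) ∂μ ≤ ∫ ω, H (Y ω) ∂μ := by
    rw [← integral_sub hIY hItY]
    exact integral_mono (hIY.sub hItY) hIHY (fun ω => hlb (Y ω))
  have c2 : ∫ ω, H (X ω) ∂μ ≤ ∫ ω, g (X ω) ∂μ + ε / 2 := by
    have h1 : ∫ ω, H (X ω) ∂μ ≤ ∫ ω, (g (X ω) + ε / 2) ∂μ :=
      integral_mono hIHX (hIX.add (integrable_const _)) (fun ω => hub (X ω))
    rwa [integral_add hIX (integrable_const _), integral_const, probReal_univ,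
      one_smul] at h1
  linarith [hn]
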